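/- Let δ ∈ (0,1) and let μ_δ be the stationary distribution with μ_δ(0) = 2δ/(1+δ), μ_δ(2i) = (2δ(1-δ)/(1+δ)³)((1-δ)/(1+δ))^{2(|i|-1)}. Then for the oscillating random walk with constant drift δ started from μ_δ, P_{μ_δ}(T > 2n) ≤ 2(1+δ²)^{-n} for every n ≥ 1, where T is the hitting time of 0. -/

import Mathlib

/-- One-step transition probability of the nearest-neighbor random walk on ℤ with
constant drift `δ` toward the origin: from 0 it steps to ±1 with probability 1/2;
from `i ≠ 0` it steps away from 0 with probability `(1-δ)/2` and toward 0 with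
probability `(1+δ)/2`. -/
noncomputable def stepP (δ : ℝ) (i j : ℤ) : ℝ :=
  if i = 0 then (if j = 1 ∨ j = -1 then 1 / 2 else 0)
  else if j = i + 1 then (if 0 < i then (1 - δ) / 2 else (1 + δ) / 2)
  else if j = i - 1 then (if 0 < i then (1 + δ) / 2 else (1 - δ) / 2)
  else 0

/-- The claimed stationary distribution of the two-step chain of the oscillating
random walk with drift `δ`: `muD δ i` is the mass of the even point `2*i`. -/
noncomputable def muD (δ : ℝ) (i : ℤ) : ℝ :=
  if i = 0 then 2 * δ / (1 + δ)
  else (2 * δ * (1 - δ) / (1 + δ) ^ 3) * ((1 - δ) / (1 + δ)) ^ (2 * (i.natAbs - 1))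


/-- `survP δ n j` is the probability that the walk started at `j` does not visit `0`
during the first `n` steps, i.e. `P_j(T > n)` where `T = inf{n ≥ 0 : X_n = 0}`. -/
noncomputable def survP (δ : ℝ) : ℕ → ℤ → ℝ
  | 0, j => if j = 0 then 0 else 1
  | n + 1, j =>
      if j = 0 then 0
      else stepP δ j (j + 1) * survP δ n (j + 1) + stepP δ j (j - 1) * survP δ n (j - 1)

lemma stepP_up {δ : ℝ} {j : ℤ} (hj : j ≠ 0) :
    stepP δ j (j+1) = if 0 < j then (1-δ)/2 else (1+δ)/2 := by
  simp [stepP, hj]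

lemma stepP_down {δ : ℝ} {j : ℤ} (hj : j ≠ 0) :
    stepP δ j (j-1) = if 0 < j then (1+δ)/2 else (1-δ)/2 := by
  have h : j - 1 ≠ j + 1 := by omega
  simp [stepP, hj, h]

lemma survP_zero (δ : ℝ) (n : ℕ) : survP δ n 0 = 0 := by
  cases n <;> simp [survP]

lemma stepP_nonneg {δ : ℝ} (hδ0 : 0 < δ) (hδ1 : δ < 1) (i j : ℤ) : 0 ≤ stepP δ i j := by
  unfold stepP; split_ifs <;> linarith

lemma survP_nonneg {δ : ℝ} (hδ0 : 0 < δ) (hδ1 : δ < 1) :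
    ∀ (n : ℕ) (j : ℤ), 0 ≤ survP δ n j := by
  intro n
  induction n with
  | zero => intro j; simp only [survP]; split_ifs <;> norm_num
  | succ n ih =>
    intro j
    simp only [survP]
    split_ifs with h
    · exact le_refl 0
    · exact add_nonneg (mul_nonneg (stepP_nonneg hδ0 hδ1 _ _) (ih _))
        (mul_nonneg (stepP_nonneg hδ0 hδ1 _ _) (ih _))

lemma survP_neg {δ : ℝ} : ∀ (n : ℕ) (j : ℤ), survP δ n (-j) = survP δ n j := by
  intro n
  induction n with
  | zero => intro j; simp [survP, neg_eq_zero]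
  | succ n ih =>
    intro j
    by_cases hj : j = 0
    · subst hj; simp
    · have hj' : -j ≠ 0 := by omega
      rw [survP, survP, if_neg hj', if_neg hj]
      have e1 : -j + 1 = -(j - 1) := by ring
      have e2 : -j - 1 = -(j + 1) := by ring
      rw [stepP_up hj', stepP_down hj', stepP_up hj, stepP_down hj, e1, e2, ih, ih]
      by_cases h0 : 0 < j
      · rw [if_neg (by omega : ¬ 0 < -j), if_neg (by omega : ¬ 0 < -j), if_pos h0, if_pos h0]
        ring
      · rw [if_pos (by omega : 0 < -j), if_pos (by omega : 0 < -j), if_neg h0, if_neg h0]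
        ring

lemma surv_bound {δ a b : ℝ} (hδ0 : 0 < δ) (hδ1 : δ < 1) (ha : 0 < a) (hb : 0 < b)
    (ha2 : a^2 = 1+δ) (hb2 : b^2 = 1-δ) :
    ∀ (n : ℕ) (j : ℤ), 0 < j → survP δ n j ≤ (a*b)^n * (a/b)^(j-1) := by
  have hba : b ≤ a := by nlinarith
  have hc1 : (1:ℝ) ≤ a/b := (one_le_div hb).mpr hba
  have hc0 : a/b ≠ 0 := by positivity
  have hq : (1-δ)/2 * (a/b) = a*b/2 := by
    rw [← hb2]; field_simp
  have hp : (1+δ)/2 * (b/a) = a*b/2 := by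
    rw [← ha2]; field_simp
  intro n
  induction n with
  | zero =>
    intro j hj
    simp only [survP, if_neg (by omega : j ≠ 0), pow_zero, one_mul]
    exact one_le_zpow₀ hc1 (by omega)
  | succ n ih =>
    intro j hj
    rw [survP, if_neg (by omega : j ≠ 0), stepP_up (by omega), stepP_down (by omega),
      if_pos hj, if_pos hj]
    by_cases h1 : j = 1
    · subst h1
      rw [show (1:ℤ) - 1 = 0 from rfl, survP_zero, mul_zero, add_zero]
      have h2 := ih 2 (by norm_num)
      calc (1-δ)/2 * survP δ n 2
          ≤ (1-δ)/2 * ((a*b)^n * (a/b)^((2:ℤ)-1)) :=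
            mul_le_mul_of_nonneg_left h2 (by linarith)
        _ = (a*b)^n * ((1-δ)/2 * (a/b)) := by norm_num; ring
        _ = (a*b)^n * (a*b/2) := by rw [hq]
        _ ≤ (a*b)^(n+1) * (a/b)^((1:ℤ)-1) := by
            simp only [sub_self, zpow_zero, mul_one, pow_succ]
            have hab : 0 < a*b := mul_pos ha hb
            nlinarith [pow_nonneg hab.le n]
    · have hj2 : 2 ≤ j := by omega
      have hup := ih (j+1) (by omega)
      have hdown := ih (j-1) (by omega)
      have e1 : (a/b)^(j+1-1) = (a/b)^(j-1) * (a/b) := by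
        rw [show j+1-1 = (j-1)+1 by ring, zpow_add_one₀ hc0]
      have e2 : (a/b)^(j-1-1) = (a/b)^(j-1) * (b/a) := by
        rw [zpow_sub_one₀ hc0, inv_div]
      calc (1-δ)/2 * survP δ n (j+1) + (1+δ)/2 * survP δ n (j-1)
          ≤ (1-δ)/2 * ((a*b)^n * (a/b)^(j+1-1)) + (1+δ)/2 * ((a*b)^n * (a/b)^(j-1-1)) := by
            gcongr <;> linarith
        _ = (a*b)^n * (a/b)^(j-1) * ((1-δ)/2 * (a/b)) +
            (a*b)^n * (a/b)^(j-1) * ((1+δ)/2 * (b/a)) := by rw [e1, e2]; ring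
        _ = (a*b)^(n+1) * (a/b)^(j-1) := by rw [hq, hp, pow_succ]; ring

/-- For the oscillating random walk with constant drift `δ ∈ (0,1)` started from the
stationary distribution `μ_δ`, the hitting time `T` of the origin satisfies
`P_{μ_δ}(T > 2n) ≤ 2(1+δ²)^{-n}` for every `n ≥ 1`. -/
theorem hitting_tail_bound (δ : ℝ) (hδ0 : 0 < δ) (hδ1 : δ < 1) (n : ℕ) (hn : 1 ≤ n) :
    ∑' j : ℤ, muD δ j * survP δ (2 * n) (2 * j) ≤ 2 * ((1 + δ ^ 2) ^ n)⁻¹ := by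
  have h1δ : (0:ℝ) < 1 + δ := by linarith
  have h1δ' : (0:ℝ) < 1 - δ := by linarith
  set a : ℝ := Real.sqrt (1+δ) with ha_def
  set b : ℝ := Real.sqrt (1-δ) with hb_def
  have ha : 0 < a := Real.sqrt_pos.mpr h1δ
  have hb : 0 < b := Real.sqrt_pos.mpr h1δ'
  have ha2 : a^2 = 1+δ := Real.sq_sqrt h1δ.le
  have hb2 : b^2 = 1-δ := Real.sq_sqrt h1δ'.le
  set r : ℝ := (1-δ)/(1+δ) with hr_def
  have hr0 : 0 ≤ r := by positivity
  have hr1 : r < 1 := by rw [hr_def, div_lt_one h1δ]; linarith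
  set A : ℝ := 2 * δ * (1 - δ) / (1 + δ) ^ 3 with hA_def
  have hA0 : 0 ≤ A := by positivity
  set K : ℝ := A * ((1+δ)*(1-δ))^n * (a/b) with hK_def
  have hK0 : 0 ≤ K := by positivity
  -- pointwise nonnegativity
  have hF0 : ∀ j : ℤ, 0 ≤ muD δ j * survP δ (2*n) (2*j) := by
    intro j
    refine mul_nonneg ?_ (survP_nonneg hδ0 hδ1 _ _)
    rw [muD]
    split_ifs
    · positivity
    · positivity
  -- pointwise bound
  have key : ∀ j : ℤ, muD δ j * survP δ (2*n) (2*j) ≤ K * r^(j.natAbs - 1) := by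
    intro j
    by_cases hj : j = 0
    · subst hj
      simp only [mul_zero, Int.natAbs_zero, zero_le_one, survP_zero]
      positivity
    · set k := j.natAbs with hk
      have hk1 : 1 ≤ k := by omega
      have hmu : muD δ j = A * r^(2*(k-1)) := by rw [muD, if_neg hj]
      have hsurv2 : survP δ (2*n) (2*j) = survP δ (2*n) (2*(k:ℤ)) := by
        rcases lt_or_gt_of_ne hj with h | h
        · rw [show (2*(k:ℤ)) = -(2*j) by omega, survP_neg]
        · rw [show (2*(k:ℤ)) = 2*j by omega]
      have hsurv : survP δ (2*n) (2*j) ≤ (a*b)^(2*n) * (a/b)^(2*(k:ℤ)-1) := by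
        rw [hsurv2]
        exact surv_bound hδ0 hδ1 ha hb ha2 hb2 (2*n) (2*(k:ℤ)) (by positivity)
      have h1 : (a*b)^(2*n) = ((1+δ)*(1-δ))^n := by
        rw [pow_mul, mul_pow, ha2, hb2]
      have h2 : (a/b)^(2*(k:ℤ)-1) = (a/b)^(2*(k-1)) * (a/b) := by
        rw [show 2*(k:ℤ)-1 = ((2*(k-1)+1 : ℕ) : ℤ) by omega, zpow_natCast, pow_succ]
      have hrc : (r*(a/b))^2 = r := by
        have hdp : (a/b)^2 = (1+δ)/(1-δ) := by rw [div_pow, ha2, hb2]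
        rw [mul_pow, hdp, hr_def]
        field_simp
      have h3 : r^(2*(k-1)) * (a/b)^(2*(k-1)) = r^(k-1) := by
        rw [← mul_pow, pow_mul, hrc]
      calc muD δ j * survP δ (2*n) (2*j)
          ≤ (A * r^(2*(k-1))) * ((a*b)^(2*n) * (a/b)^(2*(k:ℤ)-1)) := by
            rw [hmu]
            exact mul_le_mul_of_nonneg_left hsurv (by positivity)
        _ = K * (r^(2*(k-1)) * (a/b)^(2*(k-1))) := by
            rw [h1, h2, hK_def]; ring
        _ = K * r^(k-1) := by rw [h3]
  -- summing the geometric bound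
  have hgeo : HasSum (fun m:ℕ => r^m) (1-r)⁻¹ := hasSum_geometric_of_lt_one hr0 hr1
  have hpos : HasSum (fun m:ℕ => r^(m-1)) ((1-r)⁻¹ + 1) := by
    have h := (hasSum_nat_add_iff (f := fun m:ℕ => r^(m-1)) 1).mp (by simpa using hgeo)
    simpa using h
  have hint : HasSum (fun j:ℤ => K * r^(j.natAbs - 1)) (K * ((1-r)⁻¹ + 1 + (1-r)⁻¹)) := by
    refine HasSum.mul_left K ?_
    refine HasSum.of_nat_of_neg_add_one ?_ ?_
    · have e : (fun m:ℕ => r ^ (((m:ℤ)).natAbs - 1)) = fun m:ℕ => r^(m-1) := by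
        funext m; congr 1
      exact e ▸ hpos
    · have e : (fun m:ℕ => r ^ ((-((m:ℤ)+1)).natAbs - 1)) = fun m:ℕ => r^m := by
        funext m; congr 1
      exact e ▸ hgeo
  have hsumF : Summable (fun j:ℤ => muD δ j * survP δ (2*n) (2*j)) :=
    Summable.of_nonneg_of_le hF0 key hint.summable
  -- key square-root inequality
  have hab : (1-δ)*(1+2*δ)*a ≤ (1+δ)^3*b := by
    have hL : 0 ≤ (1-δ)*(1+2*δ)*a :=
      mul_nonneg (mul_nonneg h1δ'.le (by linarith)) ha.le
    have hsq : ((1-δ)*(1+2*δ)*a)^2 ≤ ((1+δ)^3*b)^2 := by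
      have expand : ((1-δ)*(1+2*δ)*a)^2 = (1-δ)^2*(1+2*δ)^2*(1+δ) := by
        rw [mul_pow, mul_pow, ha2]
      have expand2 : ((1+δ)^3*b)^2 = (1+δ)^6*(1-δ) := by
        rw [mul_pow, hb2]; ring
      rw [expand, expand2]
      nlinarith [mul_pos (mul_pos h1δ' h1δ)
        (show (0:ℝ) < 2*δ+10*δ^2+14*δ^3+5*δ^4+δ^5 by positivity)]
    exact (pow_le_pow_iff_left₀ hL (by positivity) two_ne_zero).mp hsq
  have h1r : (1:ℝ) - r = 2*δ/(1+δ) := by rw [hr_def]; field_simp; ring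
  have hs : (1-r)⁻¹ + 1 + (1-r)⁻¹ = (1+2*δ)/δ := by
    rw [h1r, inv_div]; field_simp; ring
  have h2 : A * (a/b) * ((1+2*δ)/δ) ≤ 2 := by
    have heq : A * (a/b) * ((1+2*δ)/δ) = (2*(1-δ)*(1+2*δ)*a)/((1+δ)^3*b) := by
      rw [hA_def]; field_simp
    rw [heq, div_le_iff₀ (by positivity)]
    nlinarith [hab]
  have h3 : ((1+δ)*(1-δ))^n ≤ ((1+δ^2)^n)⁻¹ := by
    rw [← inv_pow]
    refine pow_le_pow_left₀ (mul_nonneg h1δ.le h1δ'.le) ?_ n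
    have h4 : (1+δ)*(1-δ)*(1+δ^2) ≤ 1 := by nlinarith
    calc (1+δ)*(1-δ) = ((1+δ)*(1-δ)*(1+δ^2))/(1+δ^2) := by field_simp
      _ ≤ 1/(1+δ^2) := by
          exact (div_le_div_iff_of_pos_right (by positivity)).mpr h4
      _ = (1+δ^2)⁻¹ := one_div _
  calc ∑' j:ℤ, muD δ j * survP δ (2*n) (2*j)
      ≤ ∑' j:ℤ, K * r^(j.natAbs - 1) := Summable.tsum_le_tsum key hsumF hint.summable
    _ = K * ((1-r)⁻¹ + 1 + (1-r)⁻¹) := hint.tsum_eq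
    _ = ((1+δ)*(1-δ))^n * (A * (a/b) * ((1+2*δ)/δ)) := by rw [hs, hK_def]; ring
    _ ≤ ((1+δ)*(1-δ))^n * 2 := mul_le_mul_of_nonneg_left h2 (by positivity)
    _ ≤ 2 * ((1+δ^2)^n)⁻¹ := by
        rw [mul_comm]
        exact mul_le_mul_of_nonneg_left h3 (by norm_num)
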